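/- For the quadratic regression model without intercept (n = 2) on [0,1]: if z ∈ (−∞, (1 − √2)/2) ∪ (1/2, ∞), then the design supported at the points √2 − 1 and 1 with weights ω_i(z) = |L̄_i′(z)|/(|L̄_1′(z)| + |L̄_2′(z)|) (i = 1, 2) is c-optimal for c = f′(z) = (1, 2z)ᵀ: for every design η on [0,1] and every v ∈ ℝ² with M(η)v = f′(z), one has f′(z)ᵀv ≥ (|L̄_1′(z)| + |L̄_2′(z)|)², and this value is attained by the stated design. -/

import Mathlib

open Finset Matrix Real

/-- The Lagrange basis polynomials without intercept for nodes `s_1, …, s_n`: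
`L̄_i(z) = z ∏_{j≠i}(z − s_j) / (s_i ∏_{j≠i}(s_i − s_j))`. -/
noncomputable def Lbar (n : ℕ) (s : ℕ → ℝ) (i : ℕ) (z : ℝ) : ℝ :=
  (z * ∏ j ∈ (Finset.Icc 1 n).erase i, (z - s j)) /
    (s i * ∏ j ∈ (Finset.Icc 1 n).erase i, (s i - s j))

/-- The nodes `s_1 = √2 − 1`, `s_2 = 1` of the quadratic model on `[0,1]`. -/
noncomputable def nodes2 : ℕ → ℝ := fun i => if i = 1 then Real.sqrt 2 - 1 else 1

/-- The regression vector `f(x) = (x, x²)ᵀ` of the quadratic model without intercept. -/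
def modelVec2 (x : ℝ) : Fin 2 → ℝ := fun i => x ^ (i.1 + 1)

/-- An approximate design on `[0, 1]`: a probability measure with finite support
`x_1, …, x_m ⊆ [0, 1]` and weights `ω_1, …, ω_m`. -/
structure Design2 where
  m : ℕ
  pts : Fin m → ℝ
  wts : Fin m → ℝ
  pts_mem : ∀ i, pts i ∈ Set.Icc (0 : ℝ) 1
  wts_nonneg : ∀ i, 0 ≤ wts i
  wts_sum : ∑ i, wts i = 1

/-- The information matrix `M(ξ) = Σᵢ ωᵢ f(xᵢ) f(xᵢ)ᵀ` of a design. -/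
noncomputable def infoMatrix2 (ξ : Design2) : Matrix (Fin 2) (Fin 2) ℝ :=
  ∑ i, ξ.wts i • Matrix.vecMulVec (modelVec2 (ξ.pts i)) (modelVec2 (ξ.pts i))

lemma dot_info (η : Design2) (u v : Fin 2 → ℝ) :
    u ⬝ᵥ (infoMatrix2 η).mulVec v
      = ∑ k, η.wts k * ((u ⬝ᵥ modelVec2 (η.pts k)) * (modelVec2 (η.pts k) ⬝ᵥ v)) := by
  simp only [infoMatrix2, Matrix.mulVec, dotProduct, Fin.sum_univ_two,
    Matrix.sum_apply, Matrix.smul_apply, Matrix.vecMulVec_apply, smul_eq_mul,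
    Finset.mul_sum, Finset.sum_mul, ← Finset.sum_add_distrib]
  exact Finset.sum_congr rfl fun k _ => by ring

lemma vmv_mulVec (a b v : Fin 2 → ℝ) : (Matrix.vecMulVec a b).mulVec v = (b ⬝ᵥ v) • a := by
  ext i
  simp [Matrix.vecMulVec, Matrix.mulVec, dotProduct, Finset.mul_sum, mul_assoc]
  ring

lemma deriv_quad (a c z : ℝ) : deriv (fun x => (x * (x - a)) / c) z = (2*z - a)/c := by
  have h : HasDerivAt (fun x : ℝ => (x * (x - a)) / c) ((1*(z-a) + z*1)/c) z :=
    (((hasDerivAt_id z).mul ((hasDerivAt_id z).sub_const a)).div_const c)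
  rw [h.deriv]; ring

set_option maxHeartbeats 1000000 in
/-- For the quadratic model without intercept on `[0,1]`: if
`z ∈ (−∞, (1 − √2)/2) ∪ (1/2, ∞)`, the design supported at `√2 − 1` and `1` with weights
`ωᵢ(z) = |L̄_i′(z)|/(|L̄_1′(z)| + |L̄_2′(z)|)` is `c`-optimal for `c = f′(z) = (1, 2z)ᵀ`,
with optimal value `(|L̄_1′(z)| + |L̄_2′(z)|)²`. -/
theorem stmt_19 (z : ℝ) (hz : z < (1 - Real.sqrt 2) / 2 ∨ 1 / 2 < z) :
    (∀ (η : Design2) (v : Fin 2 → ℝ),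
      (infoMatrix2 η).mulVec v = ![1, 2 * z] →
      (|deriv (Lbar 2 nodes2 1) z| + |deriv (Lbar 2 nodes2 2) z|) ^ 2 ≤
        ![1, 2 * z] ⬝ᵥ v) ∧
    (∃ v : Fin 2 → ℝ,
      ((|deriv (Lbar 2 nodes2 1) z| / (|deriv (Lbar 2 nodes2 1) z| + |deriv (Lbar 2 nodes2 2) z|)) •
          Matrix.vecMulVec (modelVec2 (Real.sqrt 2 - 1)) (modelVec2 (Real.sqrt 2 - 1)) +
        (|deriv (Lbar 2 nodes2 2) z| / (|deriv (Lbar 2 nodes2 1) z| + |deriv (Lbar 2 nodes2 2) z|)) •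
          Matrix.vecMulVec (modelVec2 1) (modelVec2 1)).mulVec v = ![1, 2 * z] ∧
      ![1, 2 * z] ⬝ᵥ v =
        (|deriv (Lbar 2 nodes2 1) z| + |deriv (Lbar 2 nodes2 2) z|) ^ 2) := by
  set r : ℝ := Real.sqrt 2 with hrdef
  have hr2 : r ^ 2 = 2 := Real.sq_sqrt (by norm_num)
  have hr0 : 0 ≤ r := Real.sqrt_nonneg 2
  have hr1 : (4:ℝ)/3 < r := by nlinarith
  have hr3 : r < 3/2 := by nlinarith
  have h43 : 4 - 3*r < 0 := by linarith
  have h43' : (4:ℝ) - 3*r ≠ 0 := ne_of_lt h43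
  have h2r : (0:ℝ) < 2 - r := by linarith
  have h2r' : (2:ℝ) - r ≠ 0 := ne_of_gt h2r
  -- explicit derivative values
  have hden1 : (r-1)*((r-1)-1) = 4-3*r := by linear_combination hr2
  have hL1 : deriv (Lbar 2 nodes2 1) z = (2*z-1)/(4-3*r) := by
    have e : Lbar 2 nodes2 1 = fun x => (x * (x - 1)) / ((r - 1) * ((r - 1) - 1)) := by
      funext x
      simp [Lbar, nodes2, show (Finset.Icc 1 2).erase 1 = {2} from rfl, hrdef]
    rw [e, hden1] at *
    exact deriv_quad 1 (4-3*r) z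
  have hL2 : deriv (Lbar 2 nodes2 2) z = (2*z-(r-1))/(2-r) := by
    have e : Lbar 2 nodes2 2 = fun x => (x * (x - (r-1))) / (2 - r) := by
      funext x
      simp [Lbar, nodes2, show (Finset.Icc 1 2).erase 2 = {1} from rfl, hrdef]
      ring_nf
    rw [e]
    exact deriv_quad (r-1) (2-r) z
  rw [hL1, hL2]
  set Q : ℝ := (6+4*r)*z - (2+2*r) with hQdef
  have hcase :
      (|(2*z-1)/(4-3*r)| = (2*z-1)/(4-3*r) ∧ |(2*z-(r-1))/(2-r)| = -((2*z-(r-1))/(2-r)) ∧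
        |Q| = -Q ∧ Q ≠ 0) ∨
      (|(2*z-1)/(4-3*r)| = -((2*z-1)/(4-3*r)) ∧ |(2*z-(r-1))/(2-r)| = (2*z-(r-1))/(2-r) ∧
        |Q| = Q ∧ Q ≠ 0) := by
    rcases hz with hzl | hzr
    · left
      have hz1 : 2*z - 1 < 0 := by nlinarith
      have hz2 : 2*z - (r-1) < 0 := by nlinarith
      have hQneg : Q < 0 := by nlinarith
      exact ⟨abs_of_pos (div_pos_of_neg_of_neg hz1 h43),
        abs_of_neg (div_neg_of_neg_of_pos hz2 h2r), abs_of_neg hQneg, ne_of_lt hQneg⟩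
    · right
      have hz1 : 0 < 2*z - 1 := by linarith
      have hz2 : 0 < 2*z - (r-1) := by nlinarith
      have hQpos : 0 < Q := by nlinarith
      exact ⟨abs_of_neg (div_neg_of_pos_of_neg hz1 h43),
        abs_of_pos (div_pos hz2 h2r), abs_of_pos hQpos, ne_of_gt hQpos⟩
  have hsum : |(2*z-1)/(4-3*r)| + |(2*z-(r-1))/(2-r)| = |Q| := by
    rcases hcase with ⟨h1, h2, h3, _⟩ | ⟨h1, h2, h3, _⟩ <;> rw [h1, h2, h3] <;> field_simp
    · linear_combination ((4-3*r)*(2-r))*hQdef + ((2*z-1)*(6*r-11))*hr2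
    · linear_combination (-(4-3*r)*(2-r))*hQdef + (-(2*z-1)*(6*r-11))*hr2
  have hQne : Q ≠ 0 := by rcases hcase with ⟨_, _, _, h⟩ | ⟨_, _, _, h⟩ <;> exact h
  rw [hsum, sq_abs Q]
  constructor
  · -- lower bound
    intro η v hv
    set u : Fin 2 → ℝ := ![-(2+2*r), 3+2*r] with hudef
    have hQeq : u ⬝ᵥ ![1, 2*z] = Q := by
      simp [hudef, dotProduct, Fin.sum_univ_two, hQdef]
      ring
    have hdotu : ∑ k, η.wts k * ((u ⬝ᵥ modelVec2 (η.pts k)) * (modelVec2 (η.pts k) ⬝ᵥ v)) = Q := by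
      rw [← dot_info, hv, hQeq]
    have hdotv : ∑ k, η.wts k * ((modelVec2 (η.pts k) ⬝ᵥ v) * (modelVec2 (η.pts k) ⬝ᵥ v))
        = ![1, 2*z] ⬝ᵥ v := by
      have h := dot_info η v v
      rw [hv] at h
      calc ∑ k, η.wts k * ((modelVec2 (η.pts k) ⬝ᵥ v) * (modelVec2 (η.pts k) ⬝ᵥ v))
          = ∑ k, η.wts k * ((v ⬝ᵥ modelVec2 (η.pts k)) * (modelVec2 (η.pts k) ⬝ᵥ v)) :=
            Finset.sum_congr rfl fun k _ => by rw [dotProduct_comm]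
        _ = v ⬝ᵥ ![1, 2*z] := h.symm
        _ = ![1, 2*z] ⬝ᵥ v := dotProduct_comm _ _
    have hqbd : ∀ k, (u ⬝ᵥ modelVec2 (η.pts k))^2 ≤ 1 := by
      intro k
      obtain ⟨hx0, hx1⟩ := η.pts_mem k
      set x := η.pts k
      have hux : u ⬝ᵥ modelVec2 x = (3+2*r)*x^2 - (2+2*r)*x := by
        simp [hudef, dotProduct, Fin.sum_univ_two, modelVec2]
        ring
      rw [hux]
      have hlow : -1 ≤ (3+2*r)*x^2 - (2+2*r)*x := by
        have hid : (3+2*r)*x^2 - (2+2*r)*x + 1 = (3+2*r)*(x-(r-1))^2 := by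
          linear_combination (4*x + 1 - 2*r) * hr2
        linarith [mul_nonneg (show (0:ℝ) ≤ 3+2*r by linarith) (sq_nonneg (x-(r-1)))]
      have hhigh : (3+2*r)*x^2 - (2+2*r)*x ≤ 1 := by
        have hax : (0:ℝ) ≤ 1+(3+2*r)*x := by
          have := mul_nonneg (show (0:ℝ) ≤ 3+2*r by linarith) hx0
          linarith
        have hid2 : 1 - ((3+2*r)*x^2 - (2+2*r)*x) = (1-x)*(1+(3+2*r)*x) := by ring
        linarith [mul_nonneg (show (0:ℝ) ≤ 1-x by linarith) hax]
      nlinarith [hlow, hhigh]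
    have cs := Finset.sum_mul_sq_le_sq_mul_sq Finset.univ
      (fun k => Real.sqrt (η.wts k) * (u ⬝ᵥ modelVec2 (η.pts k)))
      (fun k => Real.sqrt (η.wts k) * (modelVec2 (η.pts k) ⬝ᵥ v))
    have e1 : ∑ k, (Real.sqrt (η.wts k) * (u ⬝ᵥ modelVec2 (η.pts k))) *
        (Real.sqrt (η.wts k) * (modelVec2 (η.pts k) ⬝ᵥ v))
        = ∑ k, η.wts k * ((u ⬝ᵥ modelVec2 (η.pts k)) * (modelVec2 (η.pts k) ⬝ᵥ v)) :=
      Finset.sum_congr rfl fun k _ => by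
        rw [mul_mul_mul_comm, Real.mul_self_sqrt (η.wts_nonneg k)]
    have e2 : ∑ k, (Real.sqrt (η.wts k) * (u ⬝ᵥ modelVec2 (η.pts k)))^2
        = ∑ k, η.wts k * (u ⬝ᵥ modelVec2 (η.pts k))^2 :=
      Finset.sum_congr rfl fun k _ => by
        rw [mul_pow, Real.sq_sqrt (η.wts_nonneg k)]
    have e3 : ∑ k, (Real.sqrt (η.wts k) * (modelVec2 (η.pts k) ⬝ᵥ v))^2
        = ∑ k, η.wts k * ((modelVec2 (η.pts k) ⬝ᵥ v) * (modelVec2 (η.pts k) ⬝ᵥ v)) :=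
      Finset.sum_congr rfl fun k _ => by
        rw [mul_pow, Real.sq_sqrt (η.wts_nonneg k)]; ring
    rw [e1, e2, e3, hdotu, hdotv] at cs
    have hb1 : ∑ k, η.wts k * (u ⬝ᵥ modelVec2 (η.pts k))^2 ≤ 1 := by
      calc ∑ k, η.wts k * (u ⬝ᵥ modelVec2 (η.pts k))^2 ≤ ∑ k, η.wts k * 1 :=
            Finset.sum_le_sum fun k _ =>
              mul_le_mul_of_nonneg_left (hqbd k) (η.wts_nonneg k)
        _ = 1 := by simp only [mul_one]; exact η.wts_sum
    have hb2 : (0:ℝ) ≤ ![1, 2*z] ⬝ᵥ v := by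
      rw [← hdotv]
      exact Finset.sum_nonneg fun k _ => mul_nonneg (η.wts_nonneg k) (mul_self_nonneg _)
    calc Q^2 ≤ (∑ k, η.wts k * (u ⬝ᵥ modelVec2 (η.pts k))^2) * (![1, 2*z] ⬝ᵥ v) := cs
      _ ≤ 1 * (![1, 2*z] ⬝ᵥ v) := mul_le_mul_of_nonneg_right hb1 hb2
      _ = ![1, 2*z] ⬝ᵥ v := one_mul _
  · -- attainment
    refine ⟨![-(2+2*r)*Q, (3+2*r)*Q], ?_, ?_⟩
    · have hp3 : r ^ 3 = 2 * r := by linear_combination r * hr2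
      have hp4 : r ^ 4 = 4 := by linear_combination (r ^ 2 + 2) * hr2
      have hp5 : r ^ 5 = 4 * r := by linear_combination (r ^ 3 + 2 * r) * hr2
      have hp6 : r ^ 6 = 8 := by linear_combination (r ^ 4 + 2 * r ^ 2 + 4) * hr2
      have hp7 : r ^ 7 = 8 * r := by linear_combination (r ^ 5 + 2 * r ^ 3 + 4 * r) * hr2
      have hp8 : r ^ 8 = 16 := by linear_combination (r ^ 6 + 2 * r ^ 4 + 4 * r ^ 2 + 8) * hr2
      have hp9 : r ^ 9 = 16 * r := by linear_combination (r ^ 7 + 2 * r ^ 5 + 4 * r ^ 3 + 8 * r) * hr2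
      have hp10 : r ^ 10 = 32 := by linear_combination (r ^ 8 + 2 * r ^ 6 + 4 * r ^ 4 + 8 * r ^ 2 + 16) * hr2
      rw [Matrix.add_mulVec, Matrix.smul_mulVec, Matrix.smul_mulVec,
        vmv_mulVec, vmv_mulVec]
      rcases hcase with ⟨h1, h2, h3, _⟩ | ⟨h1, h2, h3, _⟩ <;>
        rw [h1, h2, h3] <;> funext i <;> fin_cases i <;>
        simp only [dotProduct, Fin.sum_univ_two, modelVec2, Pi.add_apply,
          Pi.smul_apply, smul_eq_mul, Matrix.cons_val_zero, Matrix.cons_val_one,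
          Matrix.head_cons, Fin.zero_eta, Fin.mk_one, Fin.isValue, Fin.val_zero, Fin.val_one] <;> field_simp
      · ring_nf; simp only [hp3, hp4, hp5, hp6, hp7, hp8, hp9, hp10, hr2]; ring_nf
      · ring_nf; simp only [hp3, hp4, hp5, hp6, hp7, hp8, hp9, hp10, hr2]; ring_nf
      · ring_nf; simp only [hp3, hp4, hp5, hp6, hp7, hp8, hp9, hp10, hr2]; ring_nf
      · ring_nf; simp only [hp3, hp4, hp5, hp6, hp7, hp8, hp9, hp10, hr2]; ring_nf
    · simp [dotProduct, Fin.sum_univ_two]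
      ring
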